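/- Let K be a finite extension of Q_p with maximal ideal P, uniformizer π, and normalized valuation v_P. Let f(x) = x^n + f_{n−1}x^{n−1} + ... + f_0 and g(x) = x^n + g_{n−1}x^{n−1} + ... + g_0 be Eisenstein polynomials over K, let α be a root of f and β a root of g. Set w = min_{0 ≤ i ≤ n−1} ( v_P(g_i − f_i) + i/n ). Then |g(α)| = |π|^w, where v_P is extended to K(α) so that v_P(α) = 1/n. -/

import Mathlib

open Polynomial

/-- An additive valuation `v` (written additively, with `v 0 = ⊤`) on a field `Ω`,
extending the `p`-adic valuation of `ℚ_[p]` (scaled by the ramification index `e`),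
taking integer values on an intermediate field `K` and normalized so that a
uniformizer `unif` of `K` has valuation `1`. -/
structure PadicSetup (p : ℕ) [Fact p.Prime] (K Ω : Type*) [Field K] [Field Ω]
    [Algebra ℚ_[p] K] [Algebra ℚ_[p] Ω] [Algebra K Ω] [IsScalarTower ℚ_[p] K Ω] where
  v : Ω → WithTop ℚ
  v_top_iff : ∀ x : Ω, v x = ⊤ ↔ x = 0
  v_mul : ∀ x y : Ω, v (x * y) = v x + v y
  v_add : ∀ x y : Ω, min (v x) (v y) ≤ v (x + y)
  e : ℕ
  e_pos : 0 < e
  v_padic : ∀ x : ℚ_[p], x ≠ 0 →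
    v (algebraMap ℚ_[p] Ω x) = (((e : ℤ) * x.valuation : ℤ) : ℚ)
  v_int : ∀ x : K, x ≠ 0 → ∃ m : ℤ, v (algebraMap K Ω x) = ((m : ℚ) : WithTop ℚ)
  unif : K
  v_unif : v (algebraMap K Ω unif) = 1

variable {p : ℕ} [Fact p.Prime] {K Ω : Type*} [Field K] [Field Ω]
    [Algebra ℚ_[p] K] [Algebra ℚ_[p] Ω] [Algebra K Ω] [IsScalarTower ℚ_[p] K Ω]

/-- `f` is an Eisenstein polynomial of degree `n` over `K` (with respect to the
normalized valuation of `K`): monic of degree `n`, all lower coefficients have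
valuation at least `1`, and the constant coefficient has valuation exactly `1`. -/
def PadicSetup.IsEisensteinOfDegree (S : PadicSetup p K Ω) (f : K[X]) (n : ℕ) : Prop :=
  f.Monic ∧ f.natDegree = n ∧ (∀ i < n, 1 ≤ S.v (algebraMap K Ω (f.coeff i))) ∧
    S.v (algebraMap K Ω (f.coeff 0)) = 1

/-- The `i`-th coefficient of the ramification polynomial `ρ(x) = f(αx+α)/αⁿ` of `f`,
namely `ρ_i = ∑_{k=i}^n C(k,i) f_k α^{k-n}`. -/
noncomputable def PadicSetup.rho (S : PadicSetup p K Ω) (f : K[X]) (n : ℕ) (α : Ω)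
    (i : ℕ) : Ω :=
  ∑ k ∈ Finset.Icc i n, (k.choose i : Ω) * algebraMap K Ω (f.coeff k) * α ^ ((k : ℤ) - (n : ℤ))

namespace PadicSetup
variable (S : PadicSetup p K Ω)

lemma v_zero' : S.v 0 = ⊤ := (S.v_top_iff 0).2 rfl

lemma v_ne_top {x : Ω} (hx : x ≠ 0) : S.v x ≠ ⊤ := fun h => hx ((S.v_top_iff x).1 h)

lemma v_one' : S.v 1 = 0 := by
  have h := S.v_mul 1 1
  rw [one_mul] at h
  obtain ⟨t, ht⟩ := WithTop.ne_top_iff_exists.1 (S.v_ne_top (one_ne_zero : (1:Ω) ≠ 0))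
  rw [← ht] at h ⊢
  have : t = t + t := by exact_mod_cast h
  have : t = 0 := by linarith
  exact_mod_cast congrArg (fun q : ℚ => (q : WithTop ℚ)) this

lemma v_neg' (x : Ω) : S.v (-x) = S.v x := by
  have h := S.v_mul (-1) (-1)
  rw [neg_one_mul, neg_neg, S.v_one'] at h
  obtain ⟨t, ht⟩ := WithTop.ne_top_iff_exists.1 (S.v_ne_top (neg_ne_zero.2 (one_ne_zero : (1:Ω) ≠ 0)))
  rw [← ht] at h
  have h' : (0:ℚ) = t + t := by exact_mod_cast h
  have ht0 : t = 0 := by linarith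
  have hv : S.v (-1 : Ω) = 0 := by rw [← ht, ht0]; norm_cast
  calc S.v (-x) = S.v ((-1) * x) := by rw [neg_one_mul]
    _ = S.v (-1 : Ω) + S.v x := S.v_mul _ _
    _ = S.v x := by rw [hv, zero_add]

lemma v_pow' {x : Ω} {t : ℚ} (h : S.v x = (t : WithTop ℚ)) (k : ℕ) :
    S.v (x ^ k) = (((k : ℚ) * t : ℚ) : WithTop ℚ) := by
  induction k with
  | zero => simp [S.v_one']
  | succ k ih =>
      rw [pow_succ, S.v_mul, ih, h, ← WithTop.coe_add]
      congr 1
      push_cast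
      ring

lemma le_v_sum {ι : Type*} (s : Finset ι) (x : ι → Ω) (c : WithTop ℚ)
    (h : ∀ i ∈ s, c ≤ S.v (x i)) : c ≤ S.v (∑ i ∈ s, x i) := by
  classical
  induction s using Finset.cons_induction with
  | empty => simp [S.v_zero']
  | cons a s ha ih =>
      rw [Finset.sum_cons]
      refine le_trans (le_min (h a (Finset.mem_cons_self a s)) ?_) (S.v_add _ _)
      exact ih fun i hi => h i (Finset.mem_cons_of_mem hi)

lemma v_add_eq_left {x y : Ω} (h : S.v x < S.v y) : S.v (x + y) = S.v x := by
  refine le_antisymm ?_ (le_trans (le_min le_rfl h.le) (S.v_add x y))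
  by_contra hlt
  push_neg at hlt
  have h2 := S.v_add (x + y) (-y)
  rw [add_neg_cancel_right, S.v_neg'] at h2
  exact absurd h2 (not_le.2 (lt_min hlt h))

lemma v_root {f : K[X]} {n : ℕ} (hn : 0 < n) (hf : S.IsEisensteinOfDegree f n)
    {α : Ω} (hα : aeval α f = 0) : S.v α = ((1 / (n : ℚ) : ℚ) : WithTop ℚ) := by
  obtain ⟨hmon, hdeg, hcoef, hc0⟩ := hf
  have hnQ : (0:ℚ) < n := by exact_mod_cast hn
  have hf0 : f.coeff 0 ≠ 0 := by
    intro h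
    rw [h, map_zero, S.v_zero'] at hc0
    exact absurd hc0 (by simp)
  have hαne : α ≠ 0 := by
    intro h
    rw [h] at hα
    rw [aeval_def, eval₂_at_zero] at hα
    exact hf0 ((_root_.map_eq_zero (algebraMap K Ω)).1 hα)
  obtain ⟨t, ht⟩ := WithTop.ne_top_iff_exists.1 (S.v_ne_top hαne)
  have hvα : S.v α = (t : WithTop ℚ) := ht.symm
  have hcn : f.coeff n = 1 := by rw [← hdeg]; exact hmon.coeff_natDegree
  have hsum : α ^ n + ∑ i ∈ Finset.range n, algebraMap K Ω (f.coeff i) * α ^ i = 0 := by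
    have h := Polynomial.aeval_eq_sum_range (R := K) (p := f) α
    rw [hα, hdeg, Finset.sum_range_succ, hcn, one_smul] at h
    simp only [Algebra.smul_def] at h
    rw [add_comm]
    exact h.symm
  have hpow : α ^ n = -∑ i ∈ Finset.range n, algebraMap K Ω (f.coeff i) * α ^ i :=
    eq_neg_of_add_eq_zero_left hsum
  have hvpow : S.v (α ^ n) = (((n : ℚ) * t : ℚ) : WithTop ℚ) := S.v_pow' hvα n
  have htb : ∀ i ∈ Finset.range n,
      ((1 + (i : ℚ) * t : ℚ) : WithTop ℚ) ≤ S.v (algebraMap K Ω (f.coeff i) * α ^ i) := by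
    intro i hi
    rw [S.v_mul, S.v_pow' hvα i]
    have h1 := hcoef i (Finset.mem_range.1 hi)
    calc ((1 + (i : ℚ) * t : ℚ) : WithTop ℚ)
        = ((1:ℚ) : WithTop ℚ) + (((i:ℚ) * t : ℚ) : WithTop ℚ) := by norm_cast
      _ ≤ S.v (algebraMap K Ω (f.coeff i)) + (((i:ℚ) * t : ℚ) : WithTop ℚ) := by
          exact add_le_add (by exact_mod_cast h1) le_rfl
  have htpos : 0 < t := by
    by_contra hle
    push_neg at hle
    have hb : ∀ i ∈ Finset.range n,
        ((1 + ((n:ℚ) - 1) * t : ℚ) : WithTop ℚ) ≤ S.v (algebraMap K Ω (f.coeff i) * α ^ i) := by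
      intro i hi
      refine le_trans ?_ (htb i hi)
      have hi' : (i : ℚ) ≤ (n : ℚ) - 1 := by
        have := Finset.mem_range.1 hi
        have : (i:ℚ) + 1 ≤ n := by exact_mod_cast this
        linarith
      have : ((n:ℚ) - 1) * t ≤ (i:ℚ) * t := by nlinarith
      exact_mod_cast (by linarith : (1:ℚ) + ((n:ℚ)-1)*t ≤ 1 + (i:ℚ)*t)
    have hs := S.le_v_sum (Finset.range n) _ _ hb
    rw [← S.v_neg' _, ← hpow, hvpow] at hs
    have : (1:ℚ) + ((n:ℚ) - 1) * t ≤ (n:ℚ) * t := by exact_mod_cast hs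
    linarith
  have hnt1 : (1:ℚ) ≤ (n:ℚ) * t := by
    have hb : ∀ i ∈ Finset.range n,
        ((1:ℚ) : WithTop ℚ) ≤ S.v (algebraMap K Ω (f.coeff i) * α ^ i) := by
      intro i hi
      refine le_trans ?_ (htb i hi)
      have : (0:ℚ) ≤ (i:ℚ) * t := by positivity
      exact_mod_cast (by linarith : (1:ℚ) ≤ 1 + (i:ℚ)*t)
    have hs := S.le_v_sum (Finset.range n) _ _ hb
    rw [← S.v_neg' _, ← hpow, hvpow] at hs
    exact_mod_cast hs
  have hnt2 : (n:ℚ) * t ≤ 1 := by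
    by_contra hgt
    push_neg at hgt
    obtain ⟨m, rfl⟩ : ∃ m, n = m + 1 := ⟨n - 1, by omega⟩
    set c : ℚ := min ((↑(m+1) : ℚ) * t) (1 + t) with hc
    have hc1 : 1 < c := lt_min hgt (by linarith)
    have hx0 : algebraMap K Ω (f.coeff 0) =
        -(α ^ (m+1)) + -(∑ i ∈ Finset.range m, algebraMap K Ω (f.coeff (i+1)) * α ^ (i+1)) := by
      have h2 := hsum
      rw [Finset.sum_range_succ'] at h2
      simp only [pow_zero, mul_one] at h2
      linear_combination h2
    have hv1 : (c : WithTop ℚ) ≤ S.v (-(α ^ (m+1))) := by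
      rw [S.v_neg', hvpow]
      exact_mod_cast min_le_left _ _
    have hv2 : (c : WithTop ℚ) ≤
        S.v (-(∑ i ∈ Finset.range m, algebraMap K Ω (f.coeff (i+1)) * α ^ (i+1))) := by
      rw [S.v_neg']
      refine S.le_v_sum _ _ _ ?_
      intro i hi
      have hi' := Finset.mem_range.1 hi
      refine le_trans ?_ (htb (i+1) (Finset.mem_range.2 (by omega)))
      have : 1 + t ≤ 1 + (↑(i+1) : ℚ) * t := by
        have : t ≤ (↑(i+1):ℚ) * t := by
          have : (1:ℚ) ≤ (↑(i+1):ℚ) := by exact_mod_cast Nat.one_le_iff_ne_zero.2 (Nat.succ_ne_zero i)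
          nlinarith
        linarith
      exact_mod_cast le_trans (min_le_right _ _) this
    have : (c : WithTop ℚ) ≤ S.v (algebraMap K Ω (f.coeff 0)) := by
      rw [hx0]
      exact le_trans (le_min hv1 hv2) (S.v_add _ _)
    rw [hc0] at this
    have : c ≤ 1 := by exact_mod_cast this
    linarith
  have : t = 1 / (n:ℚ) := by field_simp; linarith
  rw [hvα, this]
end PadicSetup

/-- For Eisenstein polynomials `f, g` of degree `n` over `K` and a root
`α` of `f`, setting `w = min_{0 ≤ i ≤ n-1} ( v_P(g_i - f_i) + i/n )` one has
`v(g(α)) = w` (multiplicatively, `|g(α)| = |π|^w`). -/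
theorem dist_formula_for_eisenstein
    [FiniteDimensional ℚ_[p] K] [IsAlgClosed Ω] [Algebra.IsAlgebraic K Ω]
    (S : PadicSetup p K Ω)
    (f g : K[X]) (n : ℕ) (hn : 0 < n)
    (hf : S.IsEisensteinOfDegree f n) (hg : S.IsEisensteinOfDegree g n)
    (α : Ω) (hα : aeval α f = 0) :
    S.v (aeval α g) =
      (Finset.range n).inf (fun i =>
        S.v (algebraMap K Ω (g.coeff i - f.coeff i)) + (((i : ℚ) / (n : ℚ) : ℚ) : WithTop ℚ)) := by
  classical
  have hvα := S.v_root hn hf hα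
  set A : ℕ → WithTop ℚ := fun i =>
    S.v (algebraMap K Ω (g.coeff i - f.coeff i)) + (((i : ℚ) / (n : ℚ) : ℚ) : WithTop ℚ) with hA
  have hdeglt : (g - f).natDegree < n := by
    by_cases hgf : g - f = 0
    · rw [hgf]; simpa using hn
    · have hd : (g - f).degree < g.degree := by
        refine Polynomial.degree_sub_lt ?_ hg.1.ne_zero ?_
        · rw [Polynomial.degree_eq_natDegree hg.1.ne_zero,
            Polynomial.degree_eq_natDegree hf.1.ne_zero, hg.2.1, hf.2.1]
        · rw [hg.1.leadingCoeff, hf.1.leadingCoeff]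
      rw [Polynomial.degree_eq_natDegree hg.1.ne_zero, hg.2.1] at hd
      exact (Polynomial.natDegree_lt_iff_degree_lt hgf).2 hd
  have hsub : aeval α g =
      ∑ i ∈ Finset.range n, algebraMap K Ω (g.coeff i - f.coeff i) * α ^ i := by
    have h1 : aeval α g = aeval α (g - f) := by rw [map_sub, hα, sub_zero]
    rw [h1, Polynomial.aeval_eq_sum_range' hdeglt]
    simp only [Polynomial.coeff_sub, Algebra.smul_def]
  have hterm : ∀ i : ℕ,
      S.v (algebraMap K Ω (g.coeff i - f.coeff i) * α ^ i) = A i := by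
    intro i
    rw [S.v_mul, S.v_pow' hvα i, hA]
    have : ((i:ℚ) * (1/(n:ℚ)) : ℚ) = ((i:ℚ)/(n:ℚ) : ℚ) := by ring
    rw [this]
  by_cases hz : ∀ i ∈ Finset.range n, g.coeff i - f.coeff i = 0
  · have h0 : ∑ i ∈ Finset.range n, algebraMap K Ω (g.coeff i - f.coeff i) * α ^ i = 0 :=
      Finset.sum_eq_zero fun i hi => by rw [hz i hi, map_zero, zero_mul]
    rw [hsub, h0, S.v_zero']
    refine (le_antisymm le_top (Finset.le_inf fun i hi => ?_)).symm
    rw [hA]; dsimp only; rw [hz i hi, map_zero, S.v_zero', top_add]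
  · push_neg at hz
    set T := (Finset.range n).filter (fun i => g.coeff i - f.coeff i ≠ 0) with hT
    have hTne : T.Nonempty := by
      obtain ⟨i, hi, hne⟩ := hz
      exact ⟨i, Finset.mem_filter.2 ⟨hi, hne⟩⟩
    obtain ⟨i₀, hi₀T, hmin⟩ := T.exists_min_image A hTne
    have hi₀r : i₀ ∈ Finset.range n := (Finset.mem_filter.1 hi₀T).1
    have hi₀ne : g.coeff i₀ - f.coeff i₀ ≠ 0 := (Finset.mem_filter.1 hi₀T).2
    obtain ⟨m₀, hm₀⟩ := S.v_int _ hi₀ne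
    have hAi₀ : A i₀ = (((m₀:ℚ) + (i₀:ℚ)/(n:ℚ) : ℚ) : WithTop ℚ) := by
      rw [hA]; dsimp only; rw [hm₀, ← WithTop.coe_add]
    have hAtop : A i₀ ≠ ⊤ := by rw [hAi₀]; exact WithTop.coe_ne_top
    have hstrict : ∀ i ∈ Finset.range n, i ≠ i₀ → A i₀ < A i := by
      intro i hi hne
      by_cases hci : g.coeff i - f.coeff i = 0
      · have hAt : A i = ⊤ := by rw [hA]; dsimp only; rw [hci, map_zero, S.v_zero', top_add]
        rw [hAt]; exact lt_top_iff_ne_top.2 hAtop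
      · have hiT : i ∈ T := Finset.mem_filter.2 ⟨hi, hci⟩
        refine lt_of_le_of_ne (hmin i hiT) ?_
        intro heq
        obtain ⟨mi, hmi⟩ := S.v_int _ hci
        have hAi : A i = (((mi:ℚ) + (i:ℚ)/(n:ℚ) : ℚ) : WithTop ℚ) := by
          rw [hA]; dsimp only; rw [hmi, ← WithTop.coe_add]
        rw [hAi₀, hAi] at heq
        have heq' : (m₀:ℚ) + (i₀:ℚ)/(n:ℚ) = (mi:ℚ) + (i:ℚ)/(n:ℚ) := by exact_mod_cast heq
        have hnQ : (0:ℚ) < n := by exact_mod_cast hn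
        have hq : (i:ℚ) - (i₀:ℚ) = ((m₀:ℚ) - mi) * n := by
          field_simp at heq'
          linarith
        have hneZ : (i:ℤ) - i₀ = ((m₀:ℤ) - mi) * n := by exact_mod_cast hq
        have hdvd : (n:ℤ) ∣ (i:ℤ) - i₀ := ⟨m₀ - mi, hneZ.trans (mul_comm _ _)⟩
        have h1 : i < n := Finset.mem_range.1 hi
        have h2 : i₀ < n := Finset.mem_range.1 hi₀r
        have habs : |(i:ℤ) - (i₀:ℤ)| < (n:ℤ) := by rw [abs_lt]; omega
        have := Int.eq_zero_of_abs_lt_dvd hdvd habs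
        exact hne (by omega)
    have hrest : A i₀ <
        S.v (∑ i ∈ (Finset.range n).erase i₀, algebraMap K Ω (g.coeff i - f.coeff i) * α ^ i) := by
      refine lt_of_lt_of_le ?_
        (S.le_v_sum _ _ (((Finset.range n).erase i₀).inf A)
          (fun i hi => by rw [hterm i]; exact Finset.inf_le hi))
      refine (Finset.lt_inf_iff (lt_top_iff_ne_top.2 hAtop)).2 ?_
      intro i hi
      exact hstrict i (Finset.mem_of_mem_erase hi) (Finset.ne_of_mem_erase hi)
    rw [hsub, ← Finset.add_sum_erase _ _ hi₀r]
    rw [← hterm i₀] at hrest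
    rw [S.v_add_eq_left hrest, hterm i₀]
    refine le_antisymm ?_ (Finset.inf_le hi₀r)
    refine Finset.le_inf fun i hi => ?_
    by_cases hii : i = i₀
    · rw [hii]
    · exact (hstrict i hi hii).le
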